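/- The Dunkl operators 𝒟_i = α z_i ∂_i + Σ_{j<i} (z_i/(z_i−z_j))(1−K_{ij}) + Σ_{j>i} (z_j/(z_i−z_j))(1−K_{ij}) − (i−1), acting on polynomials in z₁,…,z_N, satisfy the degenerate Hecke relation K_{i,i+1} 𝒟_{i+1} − 𝒟_i K_{i,i+1} = −1 for all 1 ≤ i ≤ N−1. -/

import Mathlib

set_option synthInstance.maxHeartbeats 1000000
set_option maxHeartbeats 1600000


noncomputable section

open MvPolynomial

/-- The field `F(z₁,…,z_N)` of rational functions, as the fraction field of the polynomial
ring `F[z₁,…,z_N]`. -/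
abbrev RatF (F : Type) [Field F] (N : ℕ) := FractionRing (MvPolynomial (Fin N) F)

/-- The canonical inclusion of polynomials into rational functions. -/
def toK {F : Type} [Field F] {N : ℕ} (p : MvPolynomial (Fin N) F) : RatF F N :=
  algebraMap _ _ p

/-- The variable `z_i` as a rational function. -/
def zK {F : Type} [Field F] {N : ℕ} (i : Fin N) : RatF F N := toK (X i)

/-- The operator `K_{ij}` exchanging the variables `z_i` and `z_j` in a rational function
(computed on the numerator/denominator representation `x = num x / den x`). -/
def swapK {F : Type} [Field F] {N : ℕ} (i j : Fin N) (x : RatF F N) : RatF F N :=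
  toK (rename (Equiv.swap i j) (IsFractionRing.num (MvPolynomial (Fin N) F) x)) /
    toK (rename (Equiv.swap i j)
      ((IsFractionRing.den (MvPolynomial (Fin N) F) x : MvPolynomial (Fin N) F)))

/-- The partial derivative `∂_i = ∂/∂z_i` on rational functions, via the quotient rule on the
numerator/denominator representation. -/
def pdK {F : Type} [Field F] {N : ℕ} (i : Fin N) (x : RatF F N) : RatF F N :=
  (toK (pderiv i (IsFractionRing.num (MvPolynomial (Fin N) F) x)) *
      toK ((IsFractionRing.den (MvPolynomial (Fin N) F) x : MvPolynomial (Fin N) F)) -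
    toK (IsFractionRing.num (MvPolynomial (Fin N) F) x) *
      toK (pderiv i ((IsFractionRing.den (MvPolynomial (Fin N) F) x : MvPolynomial (Fin N) F)))) /
    toK ((IsFractionRing.den (MvPolynomial (Fin N) F) x : MvPolynomial (Fin N) F)) ^ 2

namespace DunklAux
variable {F : Type} [Field F] {N : ℕ}

abbrev P (F : Type) [Field F] (N : ℕ) := MvPolynomial (Fin N) F

lemma toK_injective : Function.Injective (toK : P F N → RatF F N) :=
  IsFractionRing.injective _ _

lemma toK_ne_zero {p : P F N} (hp : p ≠ 0) : toK p ≠ 0 :=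
  fun h => hp (toK_injective (h.trans (map_zero _).symm))

def sig (i j : Fin N) : RatF F N →+* RatF F N :=
  IsFractionRing.lift (g := (algebraMap (P F N) (RatF F N)).comp
      (rename (Equiv.swap i j) : P F N →ₐ[F] P F N).toRingHom)
    ((IsFractionRing.injective _ _).comp (rename_injective _ (Equiv.swap i j).injective))

lemma sig_toK (i j : Fin N) (p : P F N) :
    sig i j (toK p) = toK (rename (Equiv.swap i j) p) :=
  IsFractionRing.lift_algebraMap _ _

lemma num_den_rep (x : RatF F N) :
    toK (IsFractionRing.num (P F N) x) /
      toK ((IsFractionRing.den (P F N) x : P F N)) = x :=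
  IsFractionRing.mk'_num_den' _ _

lemma den_ne_zero (x : RatF F N) : ((IsFractionRing.den (P F N) x : P F N)) ≠ 0 :=
  nonZeroDivisors.coe_ne_zero _

lemma swapK_eq (i j : Fin N) (x : RatF F N) : swapK i j x = sig i j x := by
  conv_rhs => rw [← num_den_rep x]
  rw [map_div₀, sig_toK, sig_toK]
  rfl

lemma comp_swap_swap (i j : Fin N) : (⇑(Equiv.swap i j) ∘ ⇑(Equiv.swap i j)) = id :=
  funext fun k => Equiv.swap_apply_self i j k

lemma sig_sig (i j : Fin N) (x : RatF F N) : sig i j (sig i j x) = x := by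
  conv_lhs => rw [← num_den_rep x]
  conv_rhs => rw [← num_den_rep x]
  rw [map_div₀, sig_toK, sig_toK, map_div₀, sig_toK, sig_toK, rename_rename, rename_rename,
    comp_swap_swap, rename_id, AlgHom.id_apply, AlgHom.id_apply]

lemma sig_conj (i j a b : Fin N) (x : RatF F N) :
    sig i j (sig a b x) = sig (Equiv.swap i j a) (Equiv.swap i j b) (sig i j x) := by
  have hfun : (⇑(Equiv.swap i j) ∘ ⇑(Equiv.swap a b))
      = ⇑(Equiv.swap (Equiv.swap i j a) (Equiv.swap i j b)) ∘ ⇑(Equiv.swap i j) := by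
    funext k
    show Equiv.swap i j (Equiv.swap a b k) = Equiv.swap _ _ (Equiv.swap i j k)
    rw [Equiv.swap_apply_apply]
    simp
  conv_lhs => rw [← num_den_rep x]
  conv_rhs => rw [← num_den_rep x]
  rw [map_div₀, sig_toK, sig_toK, map_div₀, sig_toK, sig_toK, map_div₀, sig_toK, sig_toK,
    map_div₀, sig_toK, sig_toK, rename_rename, rename_rename, rename_rename, rename_rename,
    hfun]

lemma sig_comm (i j : Fin N) (x : RatF F N) : sig i j x = sig j i x := by
  have : sig (F := F) (N := N) i j = sig j i := by
    unfold sig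
    simp only [Equiv.swap_comm i j]
  rw [this]

lemma sig_zK (i j k : Fin N) : sig i j (zK k) = zK (F := F) (Equiv.swap i j k) := by
  rw [zK, sig_toK, rename_X]; rfl

lemma sig_C (i j : Fin N) (a : F) : sig i j (toK (C a)) = toK (C a) := by
  rw [sig_toK, rename_C]

lemma toK_mul (p q : P F N) : toK (p * q) = toK p * toK q := map_mul _ _ _
lemma toK_sub (p q : P F N) : toK (p - q) = toK p - toK q := map_sub _ _ _
lemma toK_pow (p : P F N) (n : ℕ) : toK (p ^ n) = toK p ^ n := map_pow _ _ _

lemma pdK_spec (i : Fin N) (x : RatF F N) (p q : P F N) (hq : q ≠ 0)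
    (hx : x = toK p / toK q) :
    pdK i x = (toK (pderiv i p) * toK q - toK p * toK (pderiv i q)) / toK q ^ 2 := by
  set n := IsFractionRing.num (P F N) x with hn
  set d := ((IsFractionRing.den (P F N) x : P F N)) with hdd
  have hd : d ≠ 0 := den_ne_zero x
  have hdK : toK d ≠ 0 := toK_ne_zero hd
  have hqK : toK q ≠ 0 := toK_ne_zero hq
  have hcross : toK n * toK q = toK p * toK d := by
    have h1 : toK n / toK d = toK p / toK q := (num_den_rep x).trans hx
    rwa [div_eq_div_iff hdK hqK] at h1
  have h1 : n * q = p * d := toK_injective (by rw [toK_mul, toK_mul]; exact hcross)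
  have h2 : pderiv i n * q + n * pderiv i q = pderiv i p * d + p * pderiv i d := by
    have := congrArg (pderiv i) h1
    simpa only [pderiv_mul] using this
  have key : pderiv i n * d * q ^ 2 - n * pderiv i d * q ^ 2
      = pderiv i p * q * d ^ 2 - p * pderiv i q * d ^ 2 := by
    linear_combination (d * q) * h2 - (pderiv i d * q + pderiv i q * d) * h1
  have keyK : toK (pderiv i n) * toK d * toK q ^ 2 - toK n * toK (pderiv i d) * toK q ^ 2
      = toK (pderiv i p) * toK q * toK d ^ 2 - toK p * toK (pderiv i q) * toK d ^ 2 := by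
    have := congrArg toK key
    simpa only [toK_mul, toK_sub, toK_pow] using this
  unfold pdK
  rw [div_eq_div_iff (pow_ne_zero 2 hdK) (pow_ne_zero 2 hqK)]
  rw [← hn, ← hdd]
  linear_combination keyK

lemma rename_ne_zero {p : P F N} (f : Fin N ≃ Fin N) (hp : p ≠ 0) :
    rename (⇑f) p ≠ 0 :=
  fun e => hp ((rename_injective _ f.injective) (e.trans (map_zero _).symm))

lemma sig_pdK (i j a : Fin N) (x : RatF F N) :
    sig i j (pdK a x) = pdK (Equiv.swap i j a) (sig i j x) := by
  set n := IsFractionRing.num (P F N) x with hn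
  set d := ((IsFractionRing.den (P F N) x : P F N)) with hdd
  have hd : d ≠ 0 := den_ne_zero x
  have hrhs : pdK (Equiv.swap i j a) (sig i j x)
      = (toK (pderiv (Equiv.swap i j a) (rename (Equiv.swap i j) n)) * toK (rename (Equiv.swap i j) d)
          - toK (rename (Equiv.swap i j) n) * toK (pderiv (Equiv.swap i j a) (rename (Equiv.swap i j) d)))
        / toK (rename (Equiv.swap i j) d) ^ 2 := by
    refine pdK_spec _ _ _ _ (rename_ne_zero _ hd) ?_
    conv_lhs => rw [← num_den_rep x]
    rw [map_div₀, sig_toK, sig_toK]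
  rw [hrhs, pderiv_rename (Equiv.swap i j).injective, pderiv_rename (Equiv.swap i j).injective]
  unfold pdK
  rw [← hn, ← hdd]
  rw [map_div₀, map_sub, map_mul, map_mul, map_pow, sig_toK, sig_toK, sig_toK, sig_toK]


lemma final_alg {K : Type*} [Field K] (T S1 S2 c u v y x : K) (h : u - v ≠ 0) :
    T + (u / (u - v) * (y - x) + S1) + S2 - (c + 1) * y
      - (T + S1 + (v / (u - v) * (y - x) + S2) - c * y) = -x := by
  field_simp
  ring

end DunklAux

open DunklAux

/-- The Dunkl operator
`𝒟_i = α z_i ∂_i + Σ_{j<i} (z_i/(z_i−z_j))(1−K_{ij}) + Σ_{j>i} (z_j/(z_i−z_j))(1−K_{ij}) − (i−1)`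
(with `i` 1-indexed, so the constant is `(i : ℕ)` for `i : Fin N` 0-indexed). -/
def Dunkl {F : Type} [Field F] {N : ℕ} (α : F) (i : Fin N) (x : RatF F N) : RatF F N :=
  toK (C α) * zK i * pdK i x
    + ∑ j ∈ Finset.univ.filter (· < i), (zK i / (zK i - zK j)) * (x - swapK i j x)
    + ∑ j ∈ Finset.univ.filter (i < ·), (zK j / (zK i - zK j)) * (x - swapK i j x)
    - ((i : ℕ) : RatF F N) * x

/-- The degenerate Hecke relation `K_{i,i+1} 𝒟_{i+1} − 𝒟_i K_{i,i+1} = −1`. -/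
theorem dunkl_hecke_relation {F : Type} [Field F] {N : ℕ} (α : F)
    (i i' : Fin N) (h : (i' : ℕ) = (i : ℕ) + 1) (x : RatF F N) :
    swapK i i' (Dunkl α i' x) - Dunkl α i (swapK i i' x) = -x := by
  classical
  have hii : i ≠ i' := fun e => by rw [e] at h; omega
  have hiltD : i < i' := by rw [Fin.lt_def]; omega
  have hsi : Equiv.swap i i' i = i' := Equiv.swap_apply_left _ _
  have hsi' : Equiv.swap i i' i' = i := Equiv.swap_apply_right _ _
  rw [swapK_eq i i' (Dunkl α i' x), swapK_eq i i' x]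
  set y := sig i i' x with hy
  have hyx : sig i i' y = x := sig_sig i i' x
  have A1 : Finset.univ.filter (· < i') = insert i (Finset.univ.filter (· < i)) := by
    ext j
    simp only [Finset.mem_filter, Finset.mem_insert, Finset.mem_univ, true_and, Fin.lt_def,
      Fin.ext_iff, h]
    omega
  have A2 : Finset.univ.filter (i < ·) = insert i' (Finset.univ.filter (i' < ·)) := by
    ext j
    simp only [Finset.mem_filter, Finset.mem_insert, Finset.mem_univ, true_and, Fin.lt_def,
      Fin.ext_iff, h]
    omega
  have hmem1 : i ∉ Finset.univ.filter (· < i) := by simp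
  have hmem2 : i' ∉ Finset.univ.filter (i' < ·) := by simp
  have hne : zK (F := F) (N := N) i - zK i' ≠ 0 := by
    intro e
    exact hii (X_injective (toK_injective (sub_eq_zero.mp e :
      zK (F := F) (N := N) i = zK i')))
  have hterm1 : sig i i' (toK (C α) * zK i' * pdK i' x) = toK (C α) * zK i * pdK i y := by
    rw [map_mul, map_mul, sig_C, sig_zK i i' i', hsi', sig_pdK i i' i' x, hsi', ← hy]
  have hsum1 : sig i i' (∑ j ∈ Finset.univ.filter (· < i'),
        (zK i' / (zK i' - zK j)) * (x - swapK i' j x))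
      = (zK i / (zK i - zK i')) * (y - x)
        + ∑ j ∈ Finset.univ.filter (· < i), (zK i / (zK i - zK j)) * (y - swapK i j y) := by
    rw [A1, Finset.sum_insert hmem1, map_add]
    congr 1
    · rw [swapK_eq i' i x, sig_comm i' i x, map_mul, map_div₀, map_sub, map_sub, sig_sig i i' x,
        sig_zK i i' i', sig_zK i i' i, hsi, hsi', ← hy]
    · rw [map_sum]
      refine Finset.sum_congr rfl fun j hj => ?_
      have hjlt : j < i := by simpa using hj
      have hj1 : j ≠ i := ne_of_lt hjlt
      have hj2 : j ≠ i' := ne_of_lt (lt_trans hjlt hiltD)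
      have hsj : Equiv.swap i i' j = j := Equiv.swap_apply_of_ne_of_ne hj1 hj2
      rw [swapK_eq i' j x, swapK_eq i j y, map_mul, map_div₀, map_sub, map_sub,
        sig_zK i i' i', sig_zK i i' j, sig_conj i i' i' j x, hsi', hsj, ← hy]
  have hsum2 : sig i i' (∑ j ∈ Finset.univ.filter (i' < ·),
        (zK j / (zK i' - zK j)) * (x - swapK i' j x))
      = ∑ j ∈ Finset.univ.filter (i' < ·), (zK j / (zK i - zK j)) * (y - swapK i j y) := by
    rw [map_sum]
    refine Finset.sum_congr rfl fun j hj => ?_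
    have hjgt : i' < j := by simpa using hj
    have hj2 : j ≠ i' := (ne_of_lt hjgt).symm
    have hj1 : j ≠ i := (ne_of_lt (lt_trans hiltD hjgt)).symm
    have hsj : Equiv.swap i i' j = j := Equiv.swap_apply_of_ne_of_ne hj1 hj2
    rw [swapK_eq i' j x, swapK_eq i j y, map_mul, map_div₀, map_sub, map_sub,
      sig_zK i i' j, sig_zK i i' i', sig_conj i i' i' j x, hsi', hsj, ← hy]
  have hterm4 : sig i i' (((i' : ℕ) : RatF F N) * x) = (((i : ℕ) : RatF F N) + 1) * y := by
    rw [map_mul, map_natCast, ← hy, h]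
    push_cast
    ring
  unfold Dunkl
  rw [map_sub, map_add, map_add, hterm1, hsum1, hsum2, hterm4,
    A2, Finset.sum_insert hmem2, swapK_eq i i' y, hyx]
  exact final_alg _ _ _ _ _ _ _ _ hne
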